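/- Singular discrete Gronwall lemma: let 0 ≤ η < 1 and let (b_n) be nonnegative reals with b_0 = 0 and, for n ≥ 1, (nΔt)^η b_n ≤ K + C Δt (nΔt)^η Σ_{j=1}^{n-1} (jΔt)^{-η} (jΔt)^η b_j. Then there exists C_T depending on C, η, T such that (nΔt)^η b_n ≤ C_T K for all n with nΔt ≤ T. -/
import Mathlib

open Finset Real

/-- Bernoulli step: `(1-η) x^{-η} ≤ x^{1-η} - (x-1)^{1-η}` for real `x ≥ 1`. -/
lemma bern_step (η : ℝ) (hη0 : 0 ≤ η) (hη1 : η < 1) (x : ℝ) (hx : 1 ≤ x) :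
    (1 - η) * x ^ (-η) ≤ x ^ (1 - η) - (x - 1) ^ (1 - η) := by
  have hx0 : 0 < x := lt_of_lt_of_le one_pos hx
  have hxm : (0:ℝ) ≤ x - 1 := by linarith
  have hs : -1 ≤ -(1/x) := by
    have : 1/x ≤ 1 := by rw [div_le_one hx0]; linarith
    linarith
  have hb := rpow_one_add_le_one_add_mul_self hs (p := 1 - η) (by linarith) (by linarith)
  have h1 : (1 + -(1/x)) = (x - 1) / x := by field_simp; ring
  rw [h1, Real.div_rpow hxm hx0.le] at hb
  have hxp : (0:ℝ) < x ^ (1 - η) := Real.rpow_pos_of_pos hx0 _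
  have hid : x ^ (1 - η) = x ^ (-η) * x := by
    rw [← Real.rpow_add_one hx0.ne']; ring_nf
  rw [div_le_iff₀ hxp] at hb
  have h2 : (1 + (1 - η) * -(1/x)) * x ^ (1 - η) = x ^ (1 - η) - (1 - η) * x ^ (-η) := by
    rw [hid]; field_simp; ring
  rw [h2] at hb
  linarith

theorem stmt10 (η C T : ℝ) (hη0 : 0 ≤ η) (hη1 : η < 1) (hC : 0 ≤ C) (hT : 0 < T) :
    ∃ C_T > 0, ∀ Δt : ℝ, 0 < Δt → ∀ K : ℝ, 0 ≤ K → ∀ b : ℕ → ℝ,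
      (∀ n, 0 ≤ b n) → b 0 = 0 →
      (∀ n : ℕ, 1 ≤ n →
        ((n : ℝ) * Δt) ^ η * b n ≤
          K + C * Δt * ((n : ℝ) * Δt) ^ η *
            ∑ j ∈ Finset.Ico 1 n, ((j : ℝ) * Δt) ^ (-η) * (((j : ℝ) * Δt) ^ η * b j)) →
      ∀ n : ℕ, (n : ℝ) * Δt ≤ T → ((n : ℝ) * Δt) ^ η * b n ≤ C_T * K := by
  refine ⟨Real.exp (C * T / (1 - η)), Real.exp_pos _, ?_⟩
  intro Δt hΔt K hK b hb hb0 hrec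
  set c : ℝ := C * T ^ η with hc
  have hc0 : 0 ≤ c := mul_nonneg hC (Real.rpow_nonneg hT.le η)
  set u : ℕ → ℝ := fun j => c * Δt * (((j : ℝ) * Δt) ^ (-η)) with hu
  have hu0 : ∀ j, 0 ≤ u j := fun j =>
    mul_nonneg (mul_nonneg hc0 hΔt.le) (Real.rpow_nonneg (by positivity) _)
  set P : ℕ → ℝ := fun n => ∏ i ∈ Finset.Ico 1 n, (1 + u i) with hP
  have hP1 : ∀ n, 1 ≤ P n := by
    intro n
    show (1:ℝ) ≤ ∏ i ∈ Finset.Ico 1 n, (1 + u i)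
    calc (1:ℝ) = ∏ _i ∈ Finset.Ico 1 n, (1:ℝ) := by simp
      _ ≤ ∏ i ∈ Finset.Ico 1 n, (1 + u i) :=
        Finset.prod_le_prod (fun i _ => zero_le_one) (fun i _ => by have := hu0 i; linarith)
  have hP0 : ∀ n, 0 ≤ P n := fun n => le_trans zero_le_one (hP1 n)
  -- telescoping identity
  have htel : ∀ n : ℕ, 1 + ∑ j ∈ Finset.Ico 1 n, u j * P j = P n := by
    intro n
    induction n with
    | zero => simp [hP]
    | succ n ih =>
      rcases Nat.eq_zero_or_pos n with rfl | hn
      · simp [hP]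
      · simp only [hP] at ih ⊢
        rw [Finset.sum_Ico_succ_top hn, Finset.prod_Ico_succ_top hn, ← ih]
        ring
  -- key Gronwall induction
  have key : ∀ n : ℕ, (n : ℝ) * Δt ≤ T → ((n : ℝ) * Δt) ^ η * b n ≤ K * P n := by
    intro n
    induction n using Nat.strong_induction_on with
    | _ n ih =>
      intro hnT
      rcases Nat.eq_zero_or_pos n with rfl | hn
      · simp only [Nat.cast_zero, zero_mul, hb0, mul_zero]
        exact mul_nonneg hK (hP0 0)
      · have h1 := hrec n hn
        have hnΔ : (0:ℝ) ≤ (n : ℝ) * Δt := by positivity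
        have hTn : ((n : ℝ) * Δt) ^ η ≤ T ^ η := Real.rpow_le_rpow hnΔ hnT hη0
        set S := ∑ j ∈ Finset.Ico 1 n, ((j : ℝ) * Δt) ^ (-η) * (((j : ℝ) * Δt) ^ η * b j)
          with hS
        have hS0 : 0 ≤ S := Finset.sum_nonneg fun j _ =>
          mul_nonneg (Real.rpow_nonneg (by positivity) _)
            (mul_nonneg (Real.rpow_nonneg (by positivity) _) (hb j))
        have h2 : C * Δt * ((n : ℝ) * Δt) ^ η * S ≤ C * Δt * T ^ η * S := by
          have : C * Δt * ((n : ℝ) * Δt) ^ η ≤ C * Δt * T ^ η :=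
            mul_le_mul_of_nonneg_left hTn (by positivity)
          exact mul_le_mul_of_nonneg_right this hS0
        have h3 : C * Δt * T ^ η * S ≤ ∑ j ∈ Finset.Ico 1 n, u j * (K * P j) := by
          rw [hS, Finset.mul_sum]
          refine Finset.sum_le_sum fun j hj => ?_
          obtain ⟨hj1, hjn⟩ := Finset.mem_Ico.mp hj
          have hjT : (j : ℝ) * Δt ≤ T := le_trans
            (by
              have : (j : ℝ) ≤ (n : ℝ) := Nat.cast_le.mpr hjn.le
              nlinarith) hnT
          have haj : ((j : ℝ) * Δt) ^ η * b j ≤ K * P j := ih j hjn hjT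
          have hw0 : 0 ≤ ((j : ℝ) * Δt) ^ (-η) := Real.rpow_nonneg (by positivity) _
          calc C * Δt * T ^ η * (((j : ℝ) * Δt) ^ (-η) * (((j : ℝ) * Δt) ^ η * b j))
              ≤ C * Δt * T ^ η * (((j : ℝ) * Δt) ^ (-η) * (K * P j)) := by
                refine mul_le_mul_of_nonneg_left (mul_le_mul_of_nonneg_left haj hw0) ?_
                positivity
            _ = u j * (K * P j) := by rw [hu]; rw [hc]; ring
        have h4 : K + ∑ j ∈ Finset.Ico 1 n, u j * (K * P j) = K * P n := by
          rw [← htel n, mul_add, mul_one, Finset.mul_sum]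
          congr 1
          exact Finset.sum_congr rfl fun j _ => by ring
        linarith
  -- bound P n by exp(C T / (1-η))
  intro n hnT
  have hη1' : (0:ℝ) < 1 - η := by linarith
  have hsum : ∑ j ∈ Finset.Ico 1 n, u j ≤ C * T / (1 - η) := by
    set F : ℕ → ℝ := fun j => ((j : ℝ) * Δt) ^ (1 - η) / (1 - η) with hF
    have hstep : ∀ j : ℕ, 1 ≤ j → Δt * ((j : ℝ) * Δt) ^ (-η) ≤ F j - F (j - 1) := by
      intro j hj
      have hj1 : (1:ℝ) ≤ (j : ℝ) := by exact_mod_cast hj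
      have hb' := bern_step η hη0 hη1 (j : ℝ) hj1
      have hcast : ((j - 1 : ℕ) : ℝ) = (j : ℝ) - 1 := by
        have : (1:ℕ) ≤ j := hj
        push_cast [this]; ring
      have hmul : ∀ x : ℝ, 0 ≤ x → (x * Δt) ^ (1 - η) = x ^ (1 - η) * Δt ^ (1 - η) :=
        fun x hx => Real.mul_rpow hx hΔt.le
      have hΔid : Δt ^ (1 - η) = Δt ^ (-η) * Δt := by
        rw [← Real.rpow_add_one hΔt.ne']; ring_nf
      have hΔ : Δt * ((j : ℝ) * Δt) ^ (-η) = (j : ℝ) ^ (-η) * Δt ^ (1 - η) := by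
        rw [Real.mul_rpow (by linarith : (0:ℝ) ≤ (j:ℝ)) hΔt.le, hΔid]
        ring
      have hFe : F j - F (j - 1)
          = (((j:ℝ)) ^ (1 - η) - ((j:ℝ) - 1) ^ (1 - η)) * Δt ^ (1 - η) / (1 - η) := by
        simp only [hF]
        rw [hcast, hmul (j:ℝ) (by linarith), hmul ((j:ℝ) - 1) (by linarith)]
        ring
      rw [hΔ, hFe, le_div_iff₀ hη1']
      have hΔp : (0:ℝ) ≤ Δt ^ (1 - η) := Real.rpow_nonneg hΔt.le _
      nlinarith [hb', hΔp]
    have hsum1 : ∑ j ∈ Finset.Ico 1 n, Δt * ((j : ℝ) * Δt) ^ (-η) ≤ T ^ (1 - η) / (1 - η) := by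
      calc ∑ j ∈ Finset.Ico 1 n, Δt * ((j : ℝ) * Δt) ^ (-η)
          ≤ ∑ j ∈ Finset.Ico 1 n, (F j - F (j - 1)) :=
            Finset.sum_le_sum fun j hj => hstep j (Finset.mem_Ico.mp hj).1
        _ = ∑ i ∈ Finset.range (n - 1), (F (1 + i) - F (1 + i - 1)) := by
            rw [Finset.sum_Ico_eq_sum_range]
        _ = ∑ i ∈ Finset.range (n - 1), (F (i + 1) - F i) := by
            refine Finset.sum_congr rfl fun i _ => ?_
            rw [show 1 + i = i + 1 by ring, Nat.add_sub_cancel]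
        _ = F (n - 1) - F 0 := Finset.sum_range_sub F (n - 1)
        _ ≤ T ^ (1 - η) / (1 - η) := by
            have hF0 : F 0 = 0 := by
              simp [hF, Real.zero_rpow (by intro h; linarith : (1:ℝ) - η ≠ 0)]
            rw [hF0, sub_zero]
            simp only [hF]
            have h1 : ((n - 1 : ℕ) : ℝ) * Δt ≤ T := by
              refine le_trans ?_ hnT
              have : ((n - 1 : ℕ) : ℝ) ≤ (n : ℝ) := Nat.cast_le.mpr (Nat.sub_le n 1)
              nlinarith
            exact div_le_div_of_nonneg_right
              (Real.rpow_le_rpow (by positivity) h1 (by linarith)) hη1'.le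
    calc ∑ j ∈ Finset.Ico 1 n, u j
        = c * ∑ j ∈ Finset.Ico 1 n, Δt * ((j : ℝ) * Δt) ^ (-η) := by
          rw [Finset.mul_sum]; exact Finset.sum_congr rfl fun j _ => by rw [hu]; ring
      _ ≤ c * (T ^ (1 - η) / (1 - η)) := mul_le_mul_of_nonneg_left hsum1 hc0
      _ = C * T / (1 - η) := by
          rw [hc, mul_div_assoc', mul_assoc, ← Real.rpow_add hT]
          norm_num
  have hPexp : P n ≤ Real.exp (C * T / (1 - η)) := by
    calc P n = ∏ i ∈ Finset.Ico 1 n, (1 + u i) := rfl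
      _ ≤ ∏ i ∈ Finset.Ico 1 n, Real.exp (u i) :=
        Finset.prod_le_prod (fun i _ => by have := hu0 i; linarith)
          (fun i _ => by have := Real.add_one_le_exp (u i); linarith)
      _ = Real.exp (∑ i ∈ Finset.Ico 1 n, u i) := (Real.exp_sum _ _).symm
      _ ≤ Real.exp (C * T / (1 - η)) := Real.exp_le_exp.mpr hsum
  calc ((n : ℝ) * Δt) ^ η * b n ≤ K * P n := key n hnT
    _ ≤ K * Real.exp (C * T / (1 - η)) := mul_le_mul_of_nonneg_left hPexp hK
    _ = Real.exp (C * T / (1 - η)) * K := mul_comm _ _
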